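/- Let α > 0, N_b > 0, 0 < γ ≤ 1 be reals, and let δ₂ > 1 and δ₁ ≥ 2δ₂ − 1 be reals. Then Φ(αγN_b, δ₂) ≤ Φ(αN_b, δ₁ − δ₂ + 1), and consequently the asymptotic normalized instantaneous secrecy rate [Φ(αγN_b, δ₂) − Φ(αN_b, δ₁ − δ₂ + 1)]⁺ equals 0 (Corollary 4 and its surrounding remark: when the eavesdropper's antenna growth rate satisfies δ₁ ≥ 2δ₂ − 1 and the eavesdropper's noise is no stronger than the legitimate receiver's, perfect eavesdropping is achieved asymptotically). -/

import Mathlib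

/-- The function `𝓕(x, y) = (√(x(1+√y)² + 1) − √(x(1−√y)² + 1))²`. -/
noncomputable def Fcal (x y : ℝ) : ℝ :=
  (Real.sqrt (x * (1 + Real.sqrt y) ^ 2 + 1) - Real.sqrt (x * (1 - Real.sqrt y) ^ 2 + 1)) ^ 2

/-- The Verdú–Shamai asymptotic per-antenna MIMO capacity formula
`Φ(x, y) = y·log₂(1 + x − 𝓕(x,y)/4) + log₂(1 + x·y − 𝓕(x,y)/4) − (log₂ e)·𝓕(x,y)/(4x)`. -/
noncomputable def Phi (x y : ℝ) : ℝ :=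
  y * Real.logb 2 (1 + x - Fcal x y / 4) + Real.logb 2 (1 + x * y - Fcal x y / 4)
    - Real.logb 2 (Real.exp 1) * Fcal x y / (4 * x)

noncomputable def dstar (x y : ℝ) : ℝ :=
  (Real.sqrt ((1 + x - x * y) ^ 2 + 4 * x * y) - (1 + x - x * y)) / (2 * x * y)

noncomputable def fTil (x y t : ℝ) : ℝ :=
  y * (t - 1 - Real.log t) + Real.log (1 + x * y * t)

lemma dstar_pos {x y : ℝ} (hx : 0 < x) (hy : 0 < y) : 0 < dstar x y := by
  have h4 : (0:ℝ) < 4 * x * y := by positivity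
  have hv : |1 + x - x*y| < Real.sqrt ((1 + x - x * y) ^ 2 + 4 * x * y) := by
    rw [← Real.sqrt_sq_eq_abs]
    apply Real.sqrt_lt_sqrt (by positivity)
    linarith
  have := (abs_lt.mp hv).2
  have := le_abs_self (1 + x - x*y)
  unfold dstar
  have : 0 < Real.sqrt ((1 + x - x * y) ^ 2 + 4 * x * y) - (1 + x - x*y) := by linarith
  positivity

lemma dstar_quad {x y : ℝ} (hx : 0 < x) (hy : 0 < y) :
    x * y * (dstar x y) ^ 2 + (1 + x - x * y) * dstar x y - 1 = 0 := by
  have hv : (Real.sqrt ((1 + x - x * y) ^ 2 + 4 * x * y)) ^ 2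
      = (1 + x - x * y) ^ 2 + 4 * x * y :=
    Real.sq_sqrt (by nlinarith)
  unfold dstar
  generalize Real.sqrt ((1 + x - x * y) ^ 2 + 4 * x * y) = r at hv ⊢
  field_simp
  nlinarith [hv]

lemma dstar_lt_one {x y : ℝ} (hx : 0 < x) (hy : 0 < y) : dstar x y < 1 := by
  have hq := dstar_quad hx hy
  have hd := dstar_pos hx hy
  nlinarith [hq, hd, mul_pos hx hy, mul_pos (mul_pos hx hy) hd]

/-- Key closed-form identity: `Φ(x,y) = f̃(x,y,d*(x,y)) / ln 2`. -/
lemma Phi_eq {x y : ℝ} (hx : 0 < x) (hy : 0 < y) :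
    Phi x y = fTil x y (dstar x y) / Real.log 2 := by
  set d := dstar x y with hdd
  have hd0 := dstar_pos hx hy
  have hq := dstar_quad hx hy
  have hsy : Real.sqrt y ^ 2 = y := Real.sq_sqrt hy.le
  -- F = 4 x y (1 - d)
  have hA : (0:ℝ) ≤ x * (1 + Real.sqrt y) ^ 2 + 1 := by positivity
  have hB : (0:ℝ) ≤ x * (1 - Real.sqrt y) ^ 2 + 1 := by positivity
  have ha : (Real.sqrt (x * (1 + Real.sqrt y) ^ 2 + 1)) ^ 2 = x * (1 + Real.sqrt y) ^ 2 + 1 :=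
    Real.sq_sqrt hA
  have hb : (Real.sqrt (x * (1 - Real.sqrt y) ^ 2 + 1)) ^ 2 = x * (1 - Real.sqrt y) ^ 2 + 1 :=
    Real.sq_sqrt hB
  have hab : Real.sqrt (x * (1 + Real.sqrt y) ^ 2 + 1) * Real.sqrt (x * (1 - Real.sqrt y) ^ 2 + 1)
      = Real.sqrt ((1 + x - x * y) ^ 2 + 4 * x * y) := by
    rw [← Real.sqrt_mul hA]
    congr 1
    linear_combination (x^2*(Real.sqrt y^2 + y - 2) + 2*x) * hsy
  have hvd : Real.sqrt ((1 + x - x * y) ^ 2 + 4 * x * y) = 2 * x * y * d + (1 + x - x * y) := by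
    rw [hdd]; unfold dstar; field_simp; ring
  have hF : Fcal x y = 4 * (x * y) * (1 - d) := by
    unfold Fcal
    have expand : (Real.sqrt (x * (1 + Real.sqrt y) ^ 2 + 1)
        - Real.sqrt (x * (1 - Real.sqrt y) ^ 2 + 1)) ^ 2
        = (Real.sqrt (x * (1 + Real.sqrt y) ^ 2 + 1)) ^ 2
          + (Real.sqrt (x * (1 - Real.sqrt y) ^ 2 + 1)) ^ 2
          - 2 * (Real.sqrt (x * (1 + Real.sqrt y) ^ 2 + 1)
              * Real.sqrt (x * (1 - Real.sqrt y) ^ 2 + 1)) := by ring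
    rw [expand, ha, hb, hab, hvd]
    nlinarith [hsy]
  have h1 : 1 + x - Fcal x y / 4 = 1 / d := by
    have hd0' : d ≠ 0 := ne_of_gt hd0
    rw [hF]; field_simp; nlinarith [hq]
  have h2 : 1 + x * y - Fcal x y / 4 = 1 + x * y * d := by
    rw [hF]; ring
  have hld : (1:ℝ) + x * y * d > 0 := by positivity
  rw [Phi, h1, h2, hF]
  rw [Real.logb, Real.logb, Real.logb, Real.log_exp, Real.log_div one_ne_zero (ne_of_gt hd0)]
  rw [Real.log_one, fTil]
  field_simp
  ring

lemma fTil_hasDeriv {x y t : ℝ} (hx : 0 < x) (hy : 0 < y) (ht : 0 < t) :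
    HasDerivAt (fTil x y) (y * (1 - 1/t) + x * y / (1 + x * y * t)) t := by
  have h1 : HasDerivAt (fun s : ℝ => y * (s - 1 - Real.log s)) (y * (1 - 1/t)) t := by
    have := ((hasDerivAt_id t).sub_const 1).sub (Real.hasDerivAt_log (ne_of_gt ht))
    simpa [one_div] using this.const_mul y
  have h2 : HasDerivAt (fun s : ℝ => Real.log (1 + x * y * s)) (x * y / (1 + x * y * t)) t := by
    have hinner : HasDerivAt (fun s : ℝ => 1 + x * y * s) (x * y) t := by
      simpa using ((hasDerivAt_id t).const_mul (x*y)).const_add 1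
    have hne : 1 + x * y * t ≠ 0 := by positivity
    have := (Real.hasDerivAt_log hne).comp t hinner
    simpa [Function.comp_def, div_eq_inv_mul] using this
  exact h1.add h2

lemma fTil_deriv_sign {x y s : ℝ} (hx : 0 < x) (hy : 0 < y) (hs : 0 < s) :
    (y * (1 - 1/s) + x * y / (1 + x * y * s)) * (s * (1 + x * y * s))
      = y * (s - dstar x y) * (x * y * s + 1 / dstar x y) := by
  have hd0 := dstar_pos hx hy
  have hq := dstar_quad hx hy
  have hne : 1 + x * y * s ≠ 0 := by positivity
  have hne : 1 + x * y * s ≠ 0 := by positivity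
  field_simp
  linear_combination s * hq

/-- `d*` minimizes `fTil x y` over positive reals. -/
lemma fTil_min {x y t : ℝ} (hx : 0 < x) (hy : 0 < y) (ht : 0 < t) :
    fTil x y (dstar x y) ≤ fTil x y t := by
  set d := dstar x y with hdd
  have hd0 : 0 < d := dstar_pos hx hy
  have hderiv : ∀ s ∈ Set.Ioi (0:ℝ), HasDerivAt (fTil x y)
      (y * (1 - 1/s) + x * y / (1 + x * y * s)) s := fun s hs => fTil_hasDeriv hx hy hs
  have hcont : ContinuousOn (fTil x y) (Set.Ioi 0) := fun s hs =>
    ((hderiv s hs).continuousAt).continuousWithinAt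
  rcases lt_trichotomy t d with h | h | h
  · -- f strictly anti on Icc t d
    have hsub : Set.Icc t d ⊆ Set.Ioi (0:ℝ) := fun s hs => lt_of_lt_of_le ht hs.1
    have : StrictAntiOn (fTil x y) (Set.Icc t d) := by
      apply strictAntiOn_of_deriv_neg (convex_Icc t d) (hcont.mono hsub)
      intro s hs
      rw [interior_Icc] at hs
      have hs0 : 0 < s := lt_trans ht hs.1
      have hD := (hderiv s hs0).deriv
      rw [hD]
      have key := fTil_deriv_sign (s := s) hx hy hs0
      have hpos : 0 < s * (1 + x * y * s) := by positivity
      have hrhs : y * (s - d) * (x * y * s + 1 / d) < 0 := by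
        have h1 : s - d < 0 := by linarith [hs.2]
        have h2 : 0 < x * y * s + 1 / d := by positivity
        have h3 : y * (s - d) < 0 := mul_neg_of_pos_of_neg hy h1
        exact mul_neg_of_neg_of_pos h3 h2
      have heq : y * (1 - 1/s) + x * y / (1 + x * y * s)
          = y * (s - d) * (x * y * s + 1 / d) / (s * (1 + x * y * s)) := by
        rw [eq_div_iff (ne_of_gt hpos)]; exact key
      rw [heq]
      exact div_neg_of_neg_of_pos hrhs hpos
    have := this (Set.left_mem_Icc.mpr h.le) (Set.right_mem_Icc.mpr h.le) h
    linarith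
  · rw [h]
  · have hsub : Set.Icc d t ⊆ Set.Ioi (0:ℝ) := fun s hs => lt_of_lt_of_le hd0 hs.1
    have : StrictMonoOn (fTil x y) (Set.Icc d t) := by
      apply strictMonoOn_of_deriv_pos (convex_Icc d t) (hcont.mono hsub)
      intro s hs
      rw [interior_Icc] at hs
      have hs0 : 0 < s := lt_trans hd0 hs.1
      have hD := (hderiv s hs0).deriv
      rw [hD]
      have key := fTil_deriv_sign (s := s) hx hy hs0
      have hpos : 0 < s * (1 + x * y * s) := by positivity
      have h1 : 0 < s - d := by linarith [hs.1]
      have hrhs : 0 < y * (s - d) * (x * y * s + 1 / d) := by positivity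
      have heq : y * (1 - 1/s) + x * y / (1 + x * y * s)
          = y * (s - d) * (x * y * s + 1 / d) / (s * (1 + x * y * s)) := by
        rw [eq_div_iff (ne_of_gt hpos)]; exact key
      rw [heq]
      exact div_pos hrhs hpos
    have := this (Set.left_mem_Icc.mpr h.le) (Set.right_mem_Icc.mpr h.le) h
    linarith

lemma fTil_mono {x₁ x₂ y₁ y₂ t : ℝ} (hx₁ : 0 < x₁) (hx : x₁ ≤ x₂)
    (hy₁ : 0 < y₁) (hy : y₁ ≤ y₂) (ht : 0 < t) :
    fTil x₁ y₁ t ≤ fTil x₂ y₂ t := by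
  unfold fTil
  have hlog : Real.log t ≤ t - 1 := Real.log_le_sub_one_of_pos ht
  have h1 : y₁ * (t - 1 - Real.log t) ≤ y₂ * (t - 1 - Real.log t) := by
    apply mul_le_mul_of_nonneg_right hy; linarith
  have h2 : Real.log (1 + x₁ * y₁ * t) ≤ Real.log (1 + x₂ * y₂ * t) := by
    apply Real.log_le_log (by positivity)
    have : x₁ * y₁ ≤ x₂ * y₂ := mul_le_mul hx hy hy₁.le (le_trans hx₁.le hx)
    nlinarith
  linarith

/-- Corollary 4: when `δ₁ ≥ 2δ₂ − 1` and Eve's noise is no stronger than Bob's (`γ ≤ 1`),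
Bob's asymptotic normalized rate is at most Eve's, so the asymptotic normalized
instantaneous secrecy rate `[Φ(αγN_b, δ₂) − Φ(αN_b, δ₁ − δ₂ + 1)]⁺` is zero. -/
theorem perfect_eavesdropping_asymptotic (α Nb γ δ₁ δ₂ : ℝ)
    (hα : 0 < α) (hNb : 0 < Nb) (hγ0 : 0 < γ) (hγ1 : γ ≤ 1)
    (hδ₂ : 1 < δ₂) (hδ₁ : δ₁ ≥ 2 * δ₂ - 1) :
    Phi (α * γ * Nb) δ₂ ≤ Phi (α * Nb) (δ₁ - δ₂ + 1) ∧
    max (Phi (α * γ * Nb) δ₂ - Phi (α * Nb) (δ₁ - δ₂ + 1)) 0 = 0 := by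
  have hx₁ : 0 < α * γ * Nb := by positivity
  have hx₂ : 0 < α * Nb := by positivity
  have hxle : α * γ * Nb ≤ α * Nb := by nlinarith
  have hy₁ : (0:ℝ) < δ₂ := by linarith
  have hy₂ : (0:ℝ) < δ₁ - δ₂ + 1 := by linarith
  have hyle : δ₂ ≤ δ₁ - δ₂ + 1 := by linarith
  have hd₂ : 0 < dstar (α * Nb) (δ₁ - δ₂ + 1) := dstar_pos hx₂ hy₂
  have hlog2 : (0:ℝ) < Real.log 2 := Real.log_pos (by norm_num)
  have key : Phi (α * γ * Nb) δ₂ ≤ Phi (α * Nb) (δ₁ - δ₂ + 1) := by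
    rw [Phi_eq hx₁ hy₁, Phi_eq hx₂ hy₂]
    apply div_le_div_of_nonneg_right ?_ hlog2.le
    calc fTil (α * γ * Nb) δ₂ (dstar (α * γ * Nb) δ₂)
        ≤ fTil (α * γ * Nb) δ₂ (dstar (α * Nb) (δ₁ - δ₂ + 1)) := fTil_min hx₁ hy₁ hd₂
      _ ≤ fTil (α * Nb) (δ₁ - δ₂ + 1) (dstar (α * Nb) (δ₁ - δ₂ + 1)) :=
          fTil_mono hx₁ hxle hy₁ hyle hd₂
  exact ⟨key, max_eq_right (by linarith)⟩
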